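/- The set of cyclic flats of a q-matroid forms a lattice under inclusion, with meet F_1 ∧ F_2 = cyc(F_1 ∩ F_2) and join F_1 ∨ F_2 = cl(F_1 + F_2). -/
import Mathlib
set_option linter.unusedSectionVars false


open Module Submodule

variable {K E : Type*} [Field K] [Fintype K] [AddCommGroup E] [Module K E]
  [FiniteDimensional K E]

/-- The dimension of a subspace, as an integer. -/
noncomputable def dimz {K E : Type*} [Field K] [AddCommGroup E] [Module K E]
    (A : Submodule K E) : ℤ :=
  (Module.finrank K ↥A : ℤ)

/-- `r` is the rank function of a `q`-matroid on `E`: axioms (R1)-(R3). -/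
def QMat {K E : Type*} [Field K] [AddCommGroup E] [Module K E]
    (r : Submodule K E → ℤ) : Prop :=
  (∀ A : Submodule K E, 0 ≤ r A ∧ r A ≤ dimz A) ∧
  (∀ A B : Submodule K E, A ≤ B → r A ≤ r B) ∧
  (∀ A B : Submodule K E, r (A ⊔ B) + r (A ⊓ B) ≤ r A + r B)

/-- A subspace is cyclic: every codimension-1 subspace has the same rank. -/
def QCyclic {K E : Type*} [Field K] [AddCommGroup E] [Module K E]
    (r : Submodule K E → ℤ) (A : Submodule K E) : Prop :=
  ∀ B ≤ A, Module.finrank K ↥A = Module.finrank K ↥B + 1 → r B = r A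

/-- The cyclic operator: sum of all one-dimensional `x ≤ A` with
`r (B ⊔ x) = r B` for all codimension-1 subspaces `B` of `A`. -/
noncomputable def qcyc {K E : Type*} [Field K] [AddCommGroup E] [Module K E]
    (r : Submodule K E → ℤ) (A : Submodule K E) : Submodule K E :=
  sSup {x : Submodule K E | x ≤ A ∧ Module.finrank K ↥x = 1 ∧
    ∀ B ≤ A, Module.finrank K ↥A = Module.finrank K ↥B + 1 → r (B ⊔ x) = r B}

/-- The closure operator: sum of all one-dimensional `x` with `r (A ⊔ x) = r A`. -/
noncomputable def qcl {K E : Type*} [Field K] [AddCommGroup E] [Module K E]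
    (r : Submodule K E → ℤ) (A : Submodule K E) : Submodule K E :=
  sSup {x : Submodule K E | Module.finrank K ↥x = 1 ∧ r (A ⊔ x) = r A}

/-- A subspace `F` is a flat: adding any one-dimensional space outside `F`
increases the rank. -/
def QFlat {K E : Type*} [Field K] [AddCommGroup E] [Module K E]
    (r : Submodule K E → ℤ) (F : Submodule K E) : Prop :=
  ∀ x : Submodule K E, Module.finrank K ↥x = 1 → ¬ x ≤ F → r F < r (F ⊔ x)

section Aux

variable {K E : Type*} [Field K] [Fintype K] [AddCommGroup E] [Module K E]
  [FiniteDimensional K E]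
variable {r : Submodule K E → ℤ}

lemma qm_mono (hM : QMat r) {A B : Submodule K E} (h : A ≤ B) : r A ≤ r B :=
  hM.2.1 A B h

lemma line_r_le_one (hM : QMat r) {x : Submodule K E} (hx : Module.finrank K ↥x = 1) :
    r x ≤ 1 := by
  have := (hM.1 x).2
  simp only [dimz, hx] at this
  exact_mod_cast this

lemma sup_line_r (hM : QMat r) (A : Submodule K E) {x : Submodule K E}
    (hx : Module.finrank K ↥x = 1) : r (A ⊔ x) ≤ r A + 1 := by
  have h1 := hM.2.2 A x
  have h2 := (hM.1 (A ⊓ x)).1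
  have h3 := line_r_le_one hM hx
  linarith

lemma finrank_sup_line {B x : Submodule K E} (hx : Module.finrank K ↥x = 1)
    (hnx : ¬ x ≤ B) : Module.finrank K ↥(B ⊔ x) = Module.finrank K ↥B + 1 := by
  have hlt : B ⊓ x < x := lt_of_le_of_ne inf_le_right (fun h => hnx (h ▸ inf_le_left))
  have h0 : Module.finrank K ↥(B ⊓ x) = 0 := by
    have := Submodule.finrank_lt_finrank_of_lt hlt
    omega
  have := Submodule.finrank_sup_add_finrank_inf_eq B x
  omega

lemma hyperplane_sup {A B x : Submodule K E} (hBA : B ≤ A)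
    (hd : Module.finrank K ↥A = Module.finrank K ↥B + 1)
    (hxA : x ≤ A) (hx : Module.finrank K ↥x = 1) (hnx : ¬ x ≤ B) : B ⊔ x = A :=
  Submodule.eq_of_le_of_finrank_le (sup_le hBA hxA)
    (by rw [finrank_sup_line hx hnx]; omega)

lemma qm_drop (hM : QMat r) : ∀ n : ℕ, ∀ A B : Submodule K E, B ≤ A →
    Module.finrank K ↥A ≤ Module.finrank K ↥B + n → r A ≤ r B + n := by
  intro n
  induction n with
  | zero =>
    intro A B h hd
    rw [Submodule.eq_of_le_of_finrank_le h (by omega)]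
    simp
  | succ n ih =>
    intro A B h hd
    by_cases hc : Module.finrank K ↥A ≤ Module.finrank K ↥B + n
    · have := ih A B h hc
      push_cast
      linarith
    · have hne : B ≠ A := by rintro rfl; omega
      obtain ⟨a, haA, haB⟩ := SetLike.exists_of_lt (lt_of_le_of_ne h hne)
      have ha0 : a ≠ 0 := fun h0 => haB (h0 ▸ B.zero_mem)
      have hline : Module.finrank K ↥(Submodule.span K {a}) = 1 := finrank_span_singleton ha0
      have hnotle : ¬ Submodule.span K {a} ≤ B :=
        fun hh => haB (hh (Submodule.mem_span_singleton_self a))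
      have hB'A : B ⊔ Submodule.span K {a} ≤ A :=
        sup_le h ((Submodule.span_singleton_le_iff_mem a A).2 haA)
      have hd' : Module.finrank K ↥(B ⊔ Submodule.span K {a}) = Module.finrank K ↥B + 1 :=
        finrank_sup_line hline hnotle
      have h1 : r (B ⊔ Submodule.span K {a}) ≤ r B + 1 := sup_line_r hM B hline
      have h2 : r A ≤ r (B ⊔ Submodule.span K {a}) + n := ih A _ hB'A (by omega)
      push_cast
      linarith only [h1, h2]

lemma le_sSup_lines {A : Submodule K E} {S : Set (Submodule K E)}
    (h : ∀ a ∈ A, a ≠ 0 → Submodule.span K {a} ∈ S) : A ≤ sSup S := by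
  intro a ha
  by_cases h0 : a = 0
  · simp [h0]
  · exact le_sSup (h a ha h0) (Submodule.mem_span_singleton_self a)

lemma sup_absorb {F A x : Submodule K E} (h : A ≤ F) : F ⊔ (A ⊔ x) = F ⊔ x := by
  rw [← sup_assoc, sup_eq_left.mpr h]

lemma rank_sup_le_of (hM : QMat r) {A F x : Submodule K E} (hAF : A ≤ F)
    (h : r (A ⊔ x) = r A) : r (F ⊔ x) ≤ r F := by
  have hsub := hM.2.2 F (A ⊔ x)
  rw [sup_absorb hAF] at hsub
  have h2 : r A ≤ r (F ⊓ (A ⊔ x)) := hM.2.1 _ _ (le_inf hAF le_sup_left)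
  linarith

lemma hyp_inter (hM : QMat r) {D B C : Submodule K E} (hB : B ≤ D) (hC : C ≤ D)
    (hd : Module.finrank K ↥D = Module.finrank K ↥B + 1) (hCB : ¬ C ≤ B)
    (hCc : QCyclic r C) : r B = r D := by
  have hBD : B ⊔ C = D := by
    apply Submodule.eq_of_le_of_finrank_le (sup_le hB hC)
    have hlt : B < B ⊔ C := lt_of_le_of_ne le_sup_left (fun h => hCB (h ▸ le_sup_right))
    have := Submodule.finrank_lt_finrank_of_lt hlt
    omega
  have hfr := Submodule.finrank_sup_add_finrank_inf_eq B C
  rw [hBD] at hfr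
  have hBC_CB : B ⊓ C = C ⊓ B := inf_comm B C
  have hdinf : Module.finrank K ↥C = Module.finrank K ↥(C ⊓ B) + 1 := by
    rw [← hBC_CB]; omega
  have hr1 : r (C ⊓ B) = r C := hCc (C ⊓ B) inf_le_left hdinf
  have hsub := hM.2.2 B C
  rw [hBD, hBC_CB, hr1] at hsub
  have hmono := hM.2.1 _ _ hB
  linarith only [hsub, hmono]

lemma cyclic_sup (hM : QMat r) {C₁ C₂ : Submodule K E} (h₁ : QCyclic r C₁)
    (h₂ : QCyclic r C₂) : QCyclic r (C₁ ⊔ C₂) := by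
  intro B hB hd
  by_cases hc : C₁ ≤ B
  · have hc2 : ¬ C₂ ≤ B := by
      intro h
      have : C₁ ⊔ C₂ ≤ B := sup_le hc h
      have := Submodule.finrank_mono this
      omega
    exact hyp_inter hM hB le_sup_right hd hc2 h₂
  · exact hyp_inter hM hB le_sup_left hd hc h₁

lemma cyclic_sup_line (hM : QMat r) {C x : Submodule K E} (hC : QCyclic r C)
    (hx : Module.finrank K ↥x = 1) (hr : r (C ⊔ x) = r C) : QCyclic r (C ⊔ x) := by
  by_cases hxC : x ≤ C
  · rwa [sup_eq_left.mpr hxC]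
  intro B hB hd
  by_cases hc : C ≤ B
  · have hdCx : Module.finrank K ↥(C ⊔ x) = Module.finrank K ↥C + 1 :=
      finrank_sup_line hx hxC
    have hBC : B = C := (Submodule.eq_of_le_of_finrank_le hc (by omega)).symm
    rw [hBC, hr]
  · exact hyp_inter hM hB le_sup_left hd hc hC

/-! ### Closure lemmas -/

lemma le_qcl (r : Submodule K E → ℤ) (A : Submodule K E) : A ≤ qcl r A :=
  le_sSup_lines (fun a ha h0 =>
    ⟨finrank_span_singleton h0, by
      rw [sup_eq_left.mpr ((Submodule.span_singleton_le_iff_mem a A).2 ha)]⟩)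

lemma qcl_rank (hM : QMat r) (A : Submodule K E) : r (qcl r A) = r A := by
  classical
  set P : ℕ → Prop := fun n => ∃ M : Submodule K E, A ≤ M ∧ r M = r A ∧
    Module.finrank K ↥M = n with hPdef
  have hP : P (Module.finrank K ↥A) := ⟨A, le_rfl, rfl, rfl⟩
  obtain ⟨M, hAM, hrM, hdM⟩ : P (Nat.findGreatest P (Module.finrank K E)) :=
    Nat.findGreatest_spec A.finrank_le hP
  have hlines : qcl r A ≤ M := by
    apply sSup_le
    rintro x ⟨hx1, hx2⟩
    by_contra hxM
    have h4 : r (M ⊔ x) ≤ r M := rank_sup_le_of hM hAM hx2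
    have h5 : r (M ⊔ x) = r A := le_antisymm (h4.trans hrM.le)
      (hrM ▸ hM.2.1 _ _ le_sup_left)
    have hdMx : Module.finrank K ↥(M ⊔ x) = Module.finrank K ↥M + 1 :=
      finrank_sup_line hx1 hxM
    have hgt : Nat.findGreatest P (Module.finrank K E) < Module.finrank K ↥(M ⊔ x) := by
      omega
    exact Nat.findGreatest_is_greatest hgt (M ⊔ x).finrank_le
      ⟨M ⊔ x, hAM.trans le_sup_left, h5, rfl⟩
  exact le_antisymm ((hM.2.1 _ _ hlines).trans hrM.le) (hM.2.1 _ _ (le_qcl r A))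

lemma qcl_flat (hM : QMat r) (A : Submodule K E) : QFlat r (qcl r A) := by
  intro x hx hxle
  rcases (hM.2.1 _ _ (le_sup_left : qcl r A ≤ qcl r A ⊔ x)).lt_or_eq with h | h
  · exact h
  exfalso
  apply hxle
  have hAx : r (A ⊔ x) = r A := by
    have h1 : r (A ⊔ x) ≤ r (qcl r A ⊔ x) :=
      hM.2.1 _ _ (sup_le_sup_right (le_qcl r A) x)
    have h2 := qcl_rank hM A
    have h3 : r A ≤ r (A ⊔ x) := hM.2.1 _ _ le_sup_left
    linarith only [h, h1, h2, h3]
  exact le_sSup ⟨hx, hAx⟩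

lemma qcl_le_flat (hM : QMat r) {A F : Submodule K E} (hAF : A ≤ F)
    (hF : QFlat r F) : qcl r A ≤ F := by
  apply sSup_le
  rintro x ⟨hx1, hx2⟩
  by_contra hxF
  have hlt := hF x hx1 hxF
  have := rank_sup_le_of hM hAF hx2
  linarith only [hlt, this]

lemma qcl_cyclic (hM : QMat r) {C : Submodule K E} (hC : QCyclic r C) :
    QCyclic r (qcl r C) := by
  intro B hB hd
  by_cases hc : C ≤ B
  · refine le_antisymm (hM.2.1 _ _ hB) ?_
    rw [qcl_rank hM C]
    exact hM.2.1 _ _ hc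
  · exact hyp_inter hM hB (le_qcl r C) hd hc hC

/-! ### Cyclic-operator lemmas -/

lemma qcyc_le (r : Submodule K E → ℤ) (A : Submodule K E) : qcyc r A ≤ A :=
  sSup_le (fun _ hx => hx.1)

lemma cyclic_le_qcyc (hM : QMat r) {C' A : Submodule K E} (hC' : QCyclic r C')
    (hCA : C' ≤ A) : C' ≤ qcyc r A := by
  apply le_sSup_lines
  intro a ha h0
  have hx : Module.finrank K ↥(Submodule.span K {a}) = 1 := finrank_span_singleton h0
  have hxC' : Submodule.span K {a} ≤ C' := (Submodule.span_singleton_le_iff_mem a C').2 ha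
  refine ⟨hxC'.trans hCA, hx, ?_⟩
  intro B hB hd
  by_cases hxB : Submodule.span K {a} ≤ B
  · rw [sup_eq_left.mpr hxB]
  · rw [hyperplane_sup hB hd (hxC'.trans hCA) hx hxB]
    have hnCB : ¬ C' ≤ B := fun h => hxB (hxC'.trans h)
    exact (hyp_inter hM hB hCA hd hnCB hC').symm

lemma noncoloop_in_cyclic (hM : QMat r) : ∀ n : ℕ, ∀ A x : Submodule K E,
    Module.finrank K ↥A ≤ n → x ≤ A → Module.finrank K ↥x = 1 →
    (∀ B ≤ A, Module.finrank K ↥A = Module.finrank K ↥B + 1 → ¬ x ≤ B → r B = r A) →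
    ∃ C, C ≤ A ∧ QCyclic r C ∧ x ≤ C := by
  intro n
  induction n with
  | zero =>
    intro A x hA hxA hx _
    have := Submodule.finrank_mono hxA
    omega
  | succ n ih =>
    intro A x hA hxA hx hcol
    by_cases hAc : QCyclic r A
    · exact ⟨A, le_rfl, hAc, hxA⟩
    · simp only [QCyclic] at hAc
      push_neg at hAc
      obtain ⟨B₀, hB₀A, hdB₀, hrB₀⟩ := hAc
      have hrlt : r B₀ < r A := lt_of_le_of_ne (hM.2.1 _ _ hB₀A) hrB₀
      have hxB₀ : x ≤ B₀ := by
        by_contra hnx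
        exact hrB₀ (hcol B₀ hB₀A hdB₀ hnx)
      have hcol' : ∀ B' ≤ B₀, Module.finrank K ↥B₀ = Module.finrank K ↥B' + 1 →
          ¬ x ≤ B' → r B' = r B₀ := by
        intro B' hB' hd' hnx
        have hB'A : B' ≤ A := hB'.trans hB₀A
        have hdim : Module.finrank K ↥(B' ⊔ x) = Module.finrank K ↥B' + 1 :=
          finrank_sup_line hx hnx
        have hne : B' ⊔ x ≠ A := by
          intro h
          rw [h] at hdim
          omega
        obtain ⟨y, hyA, hyn⟩ := SetLike.exists_of_lt
          (lt_of_le_of_ne (sup_le hB'A hxA) hne)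
        have hy0 : y ≠ 0 := fun h => hyn (h ▸ Submodule.zero_mem _)
        have hyline : Module.finrank K ↥(Submodule.span K {y}) = 1 :=
          finrank_span_singleton hy0
        have hyB' : ¬ Submodule.span K {y} ≤ B' := by
          intro hh
          exact hyn (Submodule.mem_sup_left (hh (Submodule.mem_span_singleton_self y)))
        have hdH : Module.finrank K ↥(B' ⊔ Submodule.span K {y}) =
            Module.finrank K ↥B' + 1 := finrank_sup_line hyline hyB'
        have hHA : B' ⊔ Submodule.span K {y} ≤ A :=
          sup_le hB'A ((Submodule.span_singleton_le_iff_mem y A).2 hyA)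
        have hxH : ¬ x ≤ B' ⊔ Submodule.span K {y} := by
          intro hxH
          have hyBx : ¬ Submodule.span K {y} ≤ B' ⊔ x := by
            intro hh
            exact hyn (hh (Submodule.mem_span_singleton_self y))
          have h2 : Module.finrank K ↥((B' ⊔ x) ⊔ Submodule.span K {y}) =
              Module.finrank K ↥(B' ⊔ x) + 1 := finrank_sup_line hyline hyBx
          have h1 : (B' ⊔ x) ⊔ Submodule.span K {y} ≤ B' ⊔ Submodule.span K {y} :=
            sup_le (sup_le le_sup_left hxH) le_sup_right
          have := Submodule.finrank_mono h1
          omega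
        have hdHA : Module.finrank K ↥A =
            Module.finrank K ↥(B' ⊔ Submodule.span K {y}) + 1 := by omega
        have hrH : r (B' ⊔ Submodule.span K {y}) = r A := hcol _ hHA hdHA hxH
        have hub : r B' ≤ r B₀ := hM.2.1 _ _ hB'
        have hlb : r (B' ⊔ Submodule.span K {y}) ≤ r B' + 1 := by
          have := qm_drop hM 1 (B' ⊔ Submodule.span K {y}) B' le_sup_left (by omega)
          push_cast at this
          linarith only [this]
        omega
      obtain ⟨C, hCB₀, hCc, hxC⟩ := ih B₀ x (by omega) hxB₀ hx hcol'
      exact ⟨C, hCB₀.trans hB₀A, hCc, hxC⟩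

lemma qcyc_cyclic (hM : QMat r) (A : Submodule K E) : QCyclic r (qcyc r A) := by
  classical
  set P : ℕ → Prop := fun n => ∃ C : Submodule K E, C ≤ A ∧ QCyclic r C ∧
    Module.finrank K ↥C = n with hPdef
  have h0 : P 0 := ⟨⊥, bot_le, by intro B hB hd; simp [finrank_bot] at hd, finrank_bot K E⟩
  obtain ⟨C, hCA, hCc, hdC⟩ : P (Nat.findGreatest P (Module.finrank K E)) :=
    Nat.findGreatest_spec (Nat.zero_le _) h0
  have hmax : ∀ C', C' ≤ A → QCyclic r C' → C' ≤ C := by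
    intro C' hC'A hC'c
    have hsc : QCyclic r (C ⊔ C') := cyclic_sup hM hCc hC'c
    have hle : Module.finrank K ↥(C ⊔ C') ≤ Nat.findGreatest P (Module.finrank K E) :=
      Nat.le_findGreatest (C ⊔ C').finrank_le ⟨C ⊔ C', sup_le hCA hC'A, hsc, rfl⟩
    have heq : C ⊔ C' = C :=
      (Submodule.eq_of_le_of_finrank_le le_sup_left (by omega)).symm
    exact heq ▸ le_sup_right
  have hqc : qcyc r A = C := by
    refine le_antisymm (sSup_le ?_) (cyclic_le_qcyc hM hCc hCA)
    rintro x ⟨hxA, hx1, hcc⟩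
    have hcol : ∀ B ≤ A, Module.finrank K ↥A = Module.finrank K ↥B + 1 →
        ¬ x ≤ B → r B = r A := by
      intro B hB hd hnx
      have := hcc B hB hd
      rw [hyperplane_sup hB hd hxA hx1 hnx] at this
      exact this.symm
    obtain ⟨C₀, hC₀A, hC₀c, hxC₀⟩ :=
      noncoloop_in_cyclic hM (Module.finrank K ↥A) A x le_rfl hxA hx1 hcol
    exact hxC₀.trans (hmax C₀ hC₀A hC₀c)
  rw [hqc]
  exact hCc

lemma qcyc_flat (hM : QMat r) {F : Submodule K E} (hF : QFlat r F) :
    QFlat r (qcyc r F) := by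
  intro x hx hxC
  rcases (hM.2.1 _ _ (le_sup_left : qcyc r F ≤ qcyc r F ⊔ x)).lt_or_eq with h | h
  · exact h
  exfalso
  have hCc : QCyclic r (qcyc r F) := qcyc_cyclic hM F
  have hCF : qcyc r F ≤ F := qcyc_le r F
  have hxqcl : x ≤ qcl r (qcyc r F) := le_sSup ⟨hx, h.symm⟩
  have hxF : x ≤ F := hxqcl.trans (qcl_le_flat hM hCF hF)
  have hcyc : QCyclic r (qcyc r F ⊔ x) := cyclic_sup_line hM hCc hx h.symm
  exact hxC (le_sup_right.trans (cyclic_le_qcyc hM hcyc (sup_le hCF hxF)))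

lemma flat_inf (hM : QMat r) {F₁ F₂ : Submodule K E} (h₁ : QFlat r F₁)
    (h₂ : QFlat r F₂) : QFlat r (F₁ ⊓ F₂) := by
  intro x hx hxle
  rcases (hM.2.1 _ _ (le_sup_left : F₁ ⊓ F₂ ≤ F₁ ⊓ F₂ ⊔ x)).lt_or_eq with h | h
  · exact h
  exfalso
  have hx1 : x ≤ F₁ := by
    by_contra hn
    have hlt := h₁ x hx hn
    have := rank_sup_le_of hM (inf_le_left : F₁ ⊓ F₂ ≤ F₁) h.symm
    linarith only [hlt, this]
  have hx2 : x ≤ F₂ := by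
    by_contra hn
    have hlt := h₂ x hx hn
    have := rank_sup_le_of hM (inf_le_right : F₁ ⊓ F₂ ≤ F₂) h.symm
    linarith only [hlt, this]
  exact hxle (le_inf hx1 hx2)

end Aux

/-- cyclic flats form a lattice under inclusion, with meet
`cyc(F₁ ∩ F₂)` and join `cl(F₁ + F₂)`. -/
theorem cyclic_flats_lattice (r : Submodule K E → ℤ) (hM : QMat r)
    (F₁ F₂ : Submodule K E)
    (h₁ : QFlat r F₁ ∧ QCyclic r F₁) (h₂ : QFlat r F₂ ∧ QCyclic r F₂) :
    (QFlat r (qcyc r (F₁ ⊓ F₂)) ∧ QCyclic r (qcyc r (F₁ ⊓ F₂))) ∧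
    (QFlat r (qcl r (F₁ ⊔ F₂)) ∧ QCyclic r (qcl r (F₁ ⊔ F₂))) ∧
    qcyc r (F₁ ⊓ F₂) ≤ F₁ ∧ qcyc r (F₁ ⊓ F₂) ≤ F₂ ∧
    (∀ G : Submodule K E, QFlat r G → QCyclic r G →
      G ≤ F₁ → G ≤ F₂ → G ≤ qcyc r (F₁ ⊓ F₂)) ∧
    F₁ ≤ qcl r (F₁ ⊔ F₂) ∧ F₂ ≤ qcl r (F₁ ⊔ F₂) ∧
    (∀ G : Submodule K E, QFlat r G → QCyclic r G →
      F₁ ≤ G → F₂ ≤ G → qcl r (F₁ ⊔ F₂) ≤ G) := by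
  obtain ⟨hF₁f, hF₁c⟩ := h₁
  obtain ⟨hF₂f, hF₂c⟩ := h₂
  have hIflat : QFlat r (F₁ ⊓ F₂) := flat_inf hM hF₁f hF₂f
  have hcycI_le : qcyc r (F₁ ⊓ F₂) ≤ F₁ ⊓ F₂ := qcyc_le r (F₁ ⊓ F₂)
  refine ⟨⟨qcyc_flat hM hIflat, qcyc_cyclic hM _⟩,
    ⟨qcl_flat hM _, qcl_cyclic hM (cyclic_sup hM hF₁c hF₂c)⟩,
    hcycI_le.trans inf_le_left, hcycI_le.trans inf_le_right,
    fun G _ hGc hG1 hG2 => cyclic_le_qcyc hM hGc (le_inf hG1 hG2),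
    le_sup_left.trans (le_qcl r _), le_sup_right.trans (le_qcl r _),
    fun G hGf _ hG1 hG2 => qcl_le_flat hM (sup_le hG1 hG2) hGf⟩
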